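/- Under the random binning setup, for every x^n with type π_X̄, every conditional n-type π_{Y_{[1:T]}|X̄}, and every tuple of bin indices b_{[1:T]}: Var(N_π(x^n, b_{[1:T]})) ≤ ∑_{∅ ≠ S ⊆ [1:T]} ∑_{(y^n_{[1:T]}, ỹ^n_{[1:T]}) ∈ 𝒦_S} 1(y^n_{[1:T]} ∈ 𝒯^n_{π_{Y_{[1:T]}|X̄}}(x^n) and ỹ^n_{[1:T]} ∈ 𝒯^n_{π_{Y_{[1:T]}|X̄}}(x^n)) · p^U_S · (p^U_{S^c})². -/

import Mathlib

open Finset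

attribute [local instance] Classical.propDecidable

/-- Expectation over the uniformly random binning collection
`𝔅 = (𝓑_1, …, 𝓑_T)`, `𝓑_i : 𝒴_i^n → [1:M_i]`. -/
noncomputable def binExp {T n : ℕ} (Y : Fin T → Type*) [∀ i, Fintype (Y i)]
    [∀ i, DecidableEq (Y i)] (M : Fin T → ℕ)
    (f : (∀ i, (Fin n → Y i) → Fin (M i)) → ℝ) : ℝ :=
  (∑ B : ∀ i, (Fin n → Y i) → Fin (M i), f B) /
    (Fintype.card (∀ i, (Fin n → Y i) → Fin (M i)) : ℝ)

/-- The conditional type class `𝒯^n_{π_{Y_{[1:T]}|X̄}}(x^n)`: the set of tuples of sequences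
`y = (y_1^n, …, y_T^n)` such that the joint empirical distribution of `(y, x^n)` equals `π`. -/
noncomputable def condTypeClass {T n : ℕ} (Y : Fin T → Type*) [∀ i, Fintype (Y i)]
    {𝒳 : Type*} [Fintype 𝒳] (x : Fin n → 𝒳) (π : (∀ i, Y i) × 𝒳 → ℝ) :
    Finset (∀ i, Fin n → Y i) :=
  Finset.univ.filter (fun y => ∀ (ys : ∀ i, Y i) (a : 𝒳),
    π (ys, a) =
      ((Finset.univ.filter (fun t : Fin n => (fun i => y i t) = ys ∧ x t = a)).card : ℝ) / n)

/-- `N_π(x^n, b) = #{y ∈ 𝒯^n_{π_{Y|X̄}}(x^n) : 𝓑_i(y_i^n) = b_i ∀i}` as a function of the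
binning `B`. -/
noncomputable def Nbin {T n : ℕ} (Y : Fin T → Type*) [∀ i, Fintype (Y i)]
    {𝒳 : Type*} [Fintype 𝒳] (x : Fin n → 𝒳) (π : (∀ i, Y i) × 𝒳 → ℝ)
    {M : Fin T → ℕ} (b : ∀ i, Fin (M i))
    (B : ∀ i, (Fin n → Y i) → Fin (M i)) : ℝ :=
  (((condTypeClass Y x π).filter (fun y => ∀ i, B i (y i) = b i)).card : ℝ)

private lemma aux_count {A : Type*} [Fintype A] [DecidableEq A] {m : ℕ} (s : Finset A) (g : A → Fin m) :
    (univ.filter (fun f : A → Fin m => ∀ a ∈ s, f a = g a)).card * m ^ s.card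
      = m ^ Fintype.card A := by
  have e : {f : A → Fin m // ∀ a ∈ s, f a = g a} ≃ ((sᶜ : Finset A) → Fin m) :=
    { toFun := fun f a => f.1 a
      invFun := fun h => ⟨fun a => if ha : a ∈ s then g a else h ⟨a, by simp [ha]⟩,
        fun a ha => dif_pos ha⟩
      left_inv := fun f => Subtype.ext (funext fun a => by
        by_cases ha : a ∈ s
        · simp [ha, f.2 a ha]
        · simp [ha])
      right_inv := fun h => funext fun a => by
        have ha : (a : A) ∉ s := Finset.mem_compl.mp a.2
        simp [ha] }
  have h1 : (univ.filter (fun f : A → Fin m => ∀ a ∈ s, f a = g a)).card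
      = m ^ (Fintype.card A - s.card) := by
    rw [← Fintype.card_subtype, Fintype.card_congr e]
    simp [Fintype.card_fun, Finset.card_compl]
  rw [h1, ← pow_add, Nat.sub_add_cancel (by simpa using s.card_le_univ)]

private lemma count_one {A : Type*} [Fintype A] [DecidableEq A] {m : ℕ} (a : A) (c : Fin m) :
    (univ.filter (fun f : A → Fin m => f a = c)).card * m ^ 1
      = m ^ Fintype.card A := by
  simpa using aux_count ({a} : Finset A) (fun _ => c)

private lemma count_two {A : Type*} [Fintype A] [DecidableEq A] {m : ℕ} {a₁ a₂ : A} (h : a₁ ≠ a₂) (c : Fin m) :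
    (univ.filter (fun f : A → Fin m => f a₁ = c ∧ f a₂ = c)).card * m ^ 2
      = m ^ Fintype.card A := by
  have hc : ({a₁, a₂} : Finset A).card = 2 := Finset.card_pair h
  simpa [hc] using aux_count ({a₁, a₂} : Finset A) (fun _ => c)

private lemma ratio {m N k c : ℕ} (hm : 0 < m) (h : c * m ^ k = m ^ N) :
    (c : ℝ) / (m : ℝ) ^ N = (1 / (m : ℝ)) ^ k := by
  have hm' : (0:ℝ) < (m:ℝ) := by exact_mod_cast hm
  have h' : (c : ℝ) * (m:ℝ) ^ k = (m:ℝ) ^ N := by exact_mod_cast h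
  field_simp
  rw [← h', mul_assoc, ← mul_pow, mul_one_div_cancel hm'.ne', one_pow, mul_one]

private lemma card_pi_fun {T n : ℕ} (Y : Fin T → Type*) [∀ i, Fintype (Y i)]
    [∀ i, DecidableEq (Y i)] (M : Fin T → ℕ) :
    (Fintype.card (∀ i, (Fin n → Y i) → Fin (M i)) : ℝ)
      = ∏ i, ((M i : ℝ)) ^ (Fintype.card (Fin n → Y i)) := by
  rw [Fintype.card_pi]
  push_cast
  exact Finset.prod_congr rfl fun i _ => by
    rw [Fintype.card_fun, Fintype.card_fin]
    push_cast
    ring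

private lemma prob_one {T n : ℕ} (Y : Fin T → Type*) [∀ i, Fintype (Y i)]
    [∀ i, DecidableEq (Y i)] {M : Fin T → ℕ} (hM : ∀ i, 0 < M i) (b : ∀ i, Fin (M i)) (y : ∀ i, Fin n → Y i)
    (instB : DecidablePred fun B : ∀ i, (Fin n → Y i) → Fin (M i) => ∀ i, B i (y i) = b i) :
    ((@Finset.filter _ _ instB Finset.univ).card : ℝ)
        / (Fintype.card (∀ i, (Fin n → Y i) → Fin (M i)) : ℝ)
      = ∏ i, (1 / (M i : ℝ)) := by
  have hb : @Finset.filter _ _ instB Finset.univ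
      = Finset.univ.filter (fun B : ∀ i, (Fin n → Y i) → Fin (M i) =>
          ∀ i, B i (y i) = b i) := by congr
  rw [hb]
  have e : {B : ∀ i, (Fin n → Y i) → Fin (M i) // ∀ i, B i (y i) = b i}
      ≃ ∀ i, {f : (Fin n → Y i) → Fin (M i) // f (y i) = b i} :=
    Equiv.subtypePiEquivPi (p := fun i (f : (Fin n → Y i) → Fin (M i)) => f (y i) = b i)
  have hcount : (Finset.univ.filter (fun B : ∀ i, (Fin n → Y i) → Fin (M i) =>
        ∀ i, B i (y i) = b i)).card
      = ∏ i, (Finset.univ.filter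
          (fun f : (Fin n → Y i) → Fin (M i) => f (y i) = b i)).card := by
    rw [← Fintype.card_subtype, Fintype.card_congr e, Fintype.card_pi]
    exact Finset.prod_congr rfl fun i _ => Fintype.card_subtype _
  rw [hcount, card_pi_fun]
  push_cast
  rw [← Finset.prod_div_distrib]
  refine Finset.prod_congr rfl fun i _ => ?_
  have h1 := ratio (hM i) (count_one (y i) (b i))
  rw [pow_one] at h1
  exact h1

private lemma prob_two {T n : ℕ} (Y : Fin T → Type*) [∀ i, Fintype (Y i)]
    [∀ i, DecidableEq (Y i)] {M : Fin T → ℕ} (hM : ∀ i, 0 < M i) (b : ∀ i, Fin (M i)) (y yt : ∀ i, Fin n → Y i)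
    (instB : DecidablePred fun B : ∀ i, (Fin n → Y i) → Fin (M i) =>
      ∀ i, B i (y i) = b i ∧ B i (yt i) = b i)
    (instE : ∀ i, Decidable (y i = yt i)) :
    ((@Finset.filter _ _ instB Finset.univ).card : ℝ)
        / (Fintype.card (∀ i, (Fin n → Y i) → Fin (M i)) : ℝ)
      = ∏ i, (@ite _ (y i = yt i) (instE i) (1 / (M i : ℝ)) ((1 / (M i : ℝ)) ^ 2)) := by
  have hb : @Finset.filter _ _ instB Finset.univ
      = Finset.univ.filter (fun B : ∀ i, (Fin n → Y i) → Fin (M i) =>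
          ∀ i, B i (y i) = b i ∧ B i (yt i) = b i) := by congr
  rw [hb]
  have e : {B : ∀ i, (Fin n → Y i) → Fin (M i) // ∀ i, B i (y i) = b i ∧ B i (yt i) = b i}
      ≃ ∀ i, {f : (Fin n → Y i) → Fin (M i) // f (y i) = b i ∧ f (yt i) = b i} :=
    Equiv.subtypePiEquivPi
      (p := fun i (f : (Fin n → Y i) → Fin (M i)) => f (y i) = b i ∧ f (yt i) = b i)
  have hcount : (Finset.univ.filter (fun B : ∀ i, (Fin n → Y i) → Fin (M i) =>
        ∀ i, B i (y i) = b i ∧ B i (yt i) = b i)).card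
      = ∏ i, (Finset.univ.filter
          (fun f : (Fin n → Y i) → Fin (M i) => f (y i) = b i ∧ f (yt i) = b i)).card := by
    rw [← Fintype.card_subtype, Fintype.card_congr e, Fintype.card_pi]
    exact Finset.prod_congr rfl fun i _ => Fintype.card_subtype _
  rw [hcount, card_pi_fun]
  push_cast
  rw [← Finset.prod_div_distrib]
  refine Finset.prod_congr rfl fun i _ => ?_
  by_cases h : y i = yt i
  · rw [if_pos h]
    have hfe : (univ.filter (fun f : (Fin n → Y i) → Fin (M i) =>
          f (y i) = b i ∧ f (yt i) = b i))
        = univ.filter (fun f => f (y i) = b i) :=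
      Finset.filter_congr (fun f _ => by simp [h])
    rw [hfe]
    have h1 := ratio (hM i) (count_one (y i) (b i))
    rw [pow_one] at h1
    exact h1
  · rw [if_neg h]
    exact ratio (hM i) (count_two h (b i))

/-- Variance bound on the number of type-class members landing in a
given bin tuple:
`Var(N_π) ≤ ∑_{∅≠S⊆[1:T]} ∑_{(y,ỹ)∈𝒦_S} 1(y,ỹ ∈ 𝒯^n_π(x^n)) · p^U_S (p^U_{S^c})²`. -/
theorem stmt_7 {T n : ℕ} (Y : Fin T → Type*) [∀ i, Fintype (Y i)] [∀ i, DecidableEq (Y i)]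
    {𝒳 : Type*} [Fintype 𝒳]
    (R : Fin T → ℝ) (hR : ∀ i, 0 ≤ R i)
    (M : Fin T → ℕ) (hM : ∀ i, (M i : ℝ) = 2 ^ ((n : ℝ) * R i))
    (x : Fin n → 𝒳) (π : (∀ i, Y i) × 𝒳 → ℝ)
    (hπ0 : ∀ w, 0 ≤ π w) (hπ1 : ∑ w, π w = 1)
    (hπtype : ∀ w, ∃ k : ℕ, k ≤ n ∧ π w = (k : ℝ) / n)
    (hπmarg : ∀ a : 𝒳, ∑ ys : ∀ i, Y i, π (ys, a) =
      ((Finset.univ.filter (fun t : Fin n => x t = a)).card : ℝ) / n)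
    (b : ∀ i, Fin (M i)) :
    binExp Y M (fun B => (Nbin Y x π b B) ^ 2) -
        (binExp Y M (Nbin Y x π b)) ^ 2 ≤
      ∑ S ∈ Finset.univ.powerset.filter (fun S : Finset (Fin T) => S.Nonempty),
        ∑ y : ∀ i, Fin n → Y i, ∑ yt : ∀ i, Fin n → Y i,
          (if (∀ i ∈ S, y i = yt i) ∧ (∀ i ∉ S, y i ≠ yt i) ∧
              y ∈ condTypeClass Y x π ∧ yt ∈ condTypeClass Y x π then
            (∏ i ∈ S, (1 / (M i : ℝ))) * (∏ i ∈ Sᶜ, (1 / (M i : ℝ))) ^ 2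
          else 0) := by
  have hMpos : ∀ i, 0 < M i := fun i => (b i).pos
  haveI : Nonempty (∀ i, (Fin n → Y i) → Fin (M i)) := ⟨fun i _ => b i⟩
  set 𝒯 := condTypeClass Y x π with h𝒯
  -- Nbin as a sum of indicators
  have hNb : ∀ B : ∀ i, (Fin n → Y i) → Fin (M i),
      Nbin Y x π b B = ∑ y ∈ 𝒯, (if ∀ i, B i (y i) = b i then (1:ℝ) else 0) := by
    intro B
    simp only [Nbin, Finset.card_filter, ← h𝒯]
    push_cast
    rfl
  set p1 := ∏ i, (1 / (M i : ℝ)) with hp1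
  -- expectation of Nbin
  have hEN : binExp Y M (Nbin Y x π b) = (𝒯.card : ℝ) * p1 := by
    unfold binExp
    rw [Finset.sum_congr rfl fun B _ => hNb B, Finset.sum_comm, Finset.sum_div]
    calc (∑ y ∈ 𝒯, (∑ B : ∀ i, (Fin n → Y i) → Fin (M i),
            if ∀ i, B i (y i) = b i then (1:ℝ) else 0)
          / (Fintype.card (∀ i, (Fin n → Y i) → Fin (M i)) : ℝ))
        = ∑ y ∈ 𝒯, p1 := by
          refine Finset.sum_congr rfl fun y _ => ?_
          rw [Finset.sum_boole]
          exact prob_one Y hMpos b y _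
      _ = (𝒯.card : ℝ) * p1 := by rw [Finset.sum_const, nsmul_eq_mul]
  -- expectation of Nbin²
  have hEN2 : binExp Y M (fun B => Nbin Y x π b B ^ 2)
      = ∑ y ∈ 𝒯, ∑ yt ∈ 𝒯,
          ∏ i, (if y i = yt i then 1 / (M i : ℝ) else (1 / (M i : ℝ)) ^ 2) := by
    unfold binExp
    have hsq : ∀ B : ∀ i, (Fin n → Y i) → Fin (M i),
        Nbin Y x π b B ^ 2 = ∑ y ∈ 𝒯, ∑ yt ∈ 𝒯,
          (if (∀ i, B i (y i) = b i ∧ B i (yt i) = b i) then (1:ℝ) else 0) := by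
      intro B
      rw [sq, hNb B, Finset.sum_mul_sum]
      refine Finset.sum_congr rfl fun y _ => Finset.sum_congr rfl fun yt _ => ?_
      by_cases h1 : ∀ i, B i (y i) = b i <;> by_cases h2 : ∀ i, B i (yt i) = b i <;>
        simp [h1, h2, forall_and]
    rw [Finset.sum_congr rfl fun B _ => hsq B, Finset.sum_comm, Finset.sum_div]
    refine Finset.sum_congr rfl fun y _ => ?_
    rw [Finset.sum_comm, Finset.sum_div]
    refine Finset.sum_congr rfl fun yt _ => ?_
    rw [Finset.sum_boole]
    exact prob_two Y hMpos b y yt _ _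
  -- pointwise bound
  have key : ∀ y ∈ 𝒯, ∀ yt ∈ 𝒯,
      (∏ i, (if y i = yt i then 1 / (M i : ℝ) else (1 / (M i : ℝ)) ^ 2)) - p1 ^ 2
        ≤ ∑ S ∈ univ.powerset.filter (fun S : Finset (Fin T) => S.Nonempty),
            (if (∀ i ∈ S, y i = yt i) ∧ (∀ i ∉ S, y i ≠ yt i) ∧ y ∈ 𝒯 ∧ yt ∈ 𝒯 then
              (∏ i ∈ S, (1 / (M i : ℝ))) * (∏ i ∈ Sᶜ, (1 / (M i : ℝ))) ^ 2
            else 0) := by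
    intro y hy yt hyt
    set S0 : Finset (Fin T) := univ.filter (fun i => y i = yt i) with hS0
    have hq2split : (∏ i, (if y i = yt i then 1 / (M i : ℝ) else (1 / (M i : ℝ)) ^ 2))
        = (∏ i ∈ S0, (1 / (M i : ℝ))) * (∏ i ∈ S0ᶜ, (1 / (M i : ℝ))) ^ 2 := by
      rw [hS0, Finset.compl_filter, Finset.prod_ite, ← Finset.prod_pow]
    by_cases hS0e : S0 = ∅
    · have hall : ∀ i, y i ≠ yt i := by
        intro i hi
        have hmem : i ∈ S0 := by simp [hS0, hi]
        simp [hS0e] at hmem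
      have heq : (∏ i, (if y i = yt i then 1 / (M i : ℝ) else (1 / (M i : ℝ)) ^ 2))
          = p1 ^ 2 := by
        rw [hp1, ← Finset.prod_pow]
        exact Finset.prod_congr rfl fun i _ => if_neg (hall i)
      rw [heq, sub_self]
      refine Finset.sum_nonneg fun S _ => ?_
      split
      · have h1 : (0:ℝ) ≤ ∏ i ∈ S, (1 / (M i : ℝ)) :=
          Finset.prod_nonneg fun i _ => by positivity
        exact mul_nonneg h1 (sq_nonneg _)
      · exact le_rfl
    · have hS0ne : S0.Nonempty := Finset.nonempty_iff_ne_empty.mpr hS0e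
      have hmem : S0 ∈ univ.powerset.filter (fun S : Finset (Fin T) => S.Nonempty) := by
        simp [Finset.mem_filter, Finset.mem_powerset, hS0ne]
      have hsum : (∑ S ∈ univ.powerset.filter (fun S : Finset (Fin T) => S.Nonempty),
            (if (∀ i ∈ S, y i = yt i) ∧ (∀ i ∉ S, y i ≠ yt i) ∧ y ∈ 𝒯 ∧ yt ∈ 𝒯 then
              (∏ i ∈ S, (1 / (M i : ℝ))) * (∏ i ∈ Sᶜ, (1 / (M i : ℝ))) ^ 2
            else 0))
          = (∏ i ∈ S0, (1 / (M i : ℝ))) * (∏ i ∈ S0ᶜ, (1 / (M i : ℝ))) ^ 2 := by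
        refine Finset.sum_eq_single_of_mem S0 hmem ?_ |>.trans ?_
        · intro S _ hne
          rw [if_neg]
          rintro ⟨h1, h2, -, -⟩
          apply hne
          ext i
          rw [hS0, Finset.mem_filter]
          constructor
          · intro hi; exact ⟨Finset.mem_univ i, h1 i hi⟩
          · rintro ⟨-, he⟩
            by_contra hiS
            exact h2 i hiS he
        · rw [if_pos]
          refine ⟨fun i hi => ?_, fun i hi he => hi ?_, hy, hyt⟩
          · exact (Finset.mem_filter.mp hi).2
          · rw [hS0, Finset.mem_filter]; exact ⟨Finset.mem_univ i, he⟩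
      rw [hsum, hq2split]
      nlinarith [sq_nonneg p1]
  -- assemble
  rw [hEN2, hEN]
  have hsq2 : ((𝒯.card : ℝ) * p1) ^ 2 = ∑ y ∈ 𝒯, ∑ yt ∈ 𝒯, p1 ^ 2 := by
    simp [Finset.sum_const, nsmul_eq_mul]
    ring
  rw [hsq2, ← Finset.sum_sub_distrib]
  have hstep1 : ∀ y ∈ 𝒯,
      ((∑ yt ∈ 𝒯, ∏ i, (if y i = yt i then 1 / (M i : ℝ) else (1 / (M i : ℝ)) ^ 2))
        - ∑ yt ∈ 𝒯, p1 ^ 2)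
      ≤ ∑ yt : ∀ i, Fin n → Y i,
          ∑ S ∈ univ.powerset.filter (fun S : Finset (Fin T) => S.Nonempty),
            (if (∀ i ∈ S, y i = yt i) ∧ (∀ i ∉ S, y i ≠ yt i) ∧ y ∈ 𝒯 ∧ yt ∈ 𝒯 then
              (∏ i ∈ S, (1 / (M i : ℝ))) * (∏ i ∈ Sᶜ, (1 / (M i : ℝ))) ^ 2
            else 0) := by
    intro y hy
    rw [← Finset.sum_sub_distrib]
    calc (∑ yt ∈ 𝒯,
          ((∏ i, (if y i = yt i then 1 / (M i : ℝ) else (1 / (M i : ℝ)) ^ 2)) - p1 ^ 2))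
        ≤ ∑ yt ∈ 𝒯,
          ∑ S ∈ univ.powerset.filter (fun S : Finset (Fin T) => S.Nonempty),
            (if (∀ i ∈ S, y i = yt i) ∧ (∀ i ∉ S, y i ≠ yt i) ∧ y ∈ 𝒯 ∧ yt ∈ 𝒯 then
              (∏ i ∈ S, (1 / (M i : ℝ))) * (∏ i ∈ Sᶜ, (1 / (M i : ℝ))) ^ 2
            else 0) := Finset.sum_le_sum fun yt hyt => key y hy yt hyt
      _ ≤ _ := by
          refine Finset.sum_le_sum_of_subset_of_nonneg (Finset.subset_univ 𝒯) ?_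
          intro yt _ _
          refine Finset.sum_nonneg fun S _ => ?_
          split
          · exact mul_nonneg (Finset.prod_nonneg fun i _ => by positivity) (sq_nonneg _)
          · exact le_rfl
  calc (∑ y ∈ 𝒯,
        ((∑ yt ∈ 𝒯, ∏ i, (if y i = yt i then 1 / (M i : ℝ) else (1 / (M i : ℝ)) ^ 2))
          - ∑ yt ∈ 𝒯, p1 ^ 2))
      ≤ ∑ y ∈ 𝒯, ∑ yt : ∀ i, Fin n → Y i,
          ∑ S ∈ univ.powerset.filter (fun S : Finset (Fin T) => S.Nonempty),
            (if (∀ i ∈ S, y i = yt i) ∧ (∀ i ∉ S, y i ≠ yt i) ∧ y ∈ 𝒯 ∧ yt ∈ 𝒯 then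
              (∏ i ∈ S, (1 / (M i : ℝ))) * (∏ i ∈ Sᶜ, (1 / (M i : ℝ))) ^ 2
            else 0) := Finset.sum_le_sum hstep1
    _ ≤ ∑ y : ∀ i, Fin n → Y i, ∑ yt : ∀ i, Fin n → Y i,
          ∑ S ∈ univ.powerset.filter (fun S : Finset (Fin T) => S.Nonempty),
            (if (∀ i ∈ S, y i = yt i) ∧ (∀ i ∉ S, y i ≠ yt i) ∧ y ∈ 𝒯 ∧ yt ∈ 𝒯 then
              (∏ i ∈ S, (1 / (M i : ℝ))) * (∏ i ∈ Sᶜ, (1 / (M i : ℝ))) ^ 2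
            else 0) := by
        refine Finset.sum_le_sum_of_subset_of_nonneg (Finset.subset_univ 𝒯) ?_
        intro y _ _
        refine Finset.sum_nonneg fun yt _ => Finset.sum_nonneg fun S _ => ?_
        split
        · exact mul_nonneg (Finset.prod_nonneg fun i _ => by positivity) (sq_nonneg _)
        · exact le_rfl
    _ = _ :=
        (Finset.sum_comm.trans (Finset.sum_congr rfl fun y _ => Finset.sum_comm)).symm
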